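/- Let d ≥ 1, let p be an admissible triple of exponents, and let η ∈ (0,1). Then for every ε > 0 there exists δ > 0 such that for all f1 ∈ L^{p_1}(ℝ^{2d+1}), f2 ∈ L^{p_2}(ℝ^{2d+1}) with ‖f1‖_{p_1} ≤ δ and ‖f2‖_{p_2} ≤ δ, and every 2d×2d real matrix A with ‖AᵀJA‖ ≤ δ, one has |T'(f_{1,♯}, f_{2,♯}, g3)| ≤ ε (‖f1‖_{p_1}² + ‖f2‖_{p_2}² + ‖AᵀJA‖²), where f_{j,♯} is formed with parameter η. -/

import Mathlib

open MeasureTheory Filter Matrix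
open scoped Real ENNReal BigOperators InnerProductSpace

noncomputable section

namespace Stability

/-- Euclidean space `ℝ^n`. -/
abbrev E (n : ℕ) : Type := EuclideanSpace ℝ (Fin n)

/-- The underlying space `ℝ^{2d} × ℝ` of the Heisenberg group `ℍ^d`. -/
abbrev H (d : ℕ) : Type := E (2 * d) × ℝ

/-- A triple of exponents `p ∈ (1,∞)^3` is admissible if `∑ 1/p_j = 2`. -/
def IsAdmissible (p : Fin 3 → ℝ) : Prop :=
  (∀ j, 1 < p j) ∧ (∑ j, (p j)⁻¹) = 2

/-- Conjugate exponent `p' = p/(p-1)`. -/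
def conjExp (q : ℝ) : ℝ := q / (q - 1)

/-- The sharp Young constant `A_p`. -/
def youngA (p : Fin 3 → ℝ) : ℝ :=
  ∏ j, (p j) ^ (1 / (2 * p j)) / (conjExp (p j)) ^ (1 / (2 * conjExp (p j)))

/-- `γ_j = π p_j'`. -/
def γexp (p : Fin 3 → ℝ) (j : Fin 3) : ℝ := Real.pi * conjExp (p j)

/-- The `L^q` norm (for a real exponent `q`) of a complex-valued function. -/
def Lnorm {α : Type*} [MeasureSpace α] (q : ℝ) (f : α → ℂ) : ℝ :=
  (∫ z, ‖f z‖ ^ q) ^ (1 / q)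

/-- Membership of a triple of functions in `L^p = L^{p_1} × L^{p_2} × L^{p_3}`. -/
def MemLpT {α : Type*} [MeasureSpace α] (p : Fin 3 → ℝ) (f : Fin 3 → α → ℂ) : Prop :=
  ∀ j, MemLp (f j) (ENNReal.ofReal (p j)) volume

/-- Maximum of a triple of reals. -/
def tmax (u : Fin 3 → ℝ) : ℝ := max (u 0) (max (u 1) (u 2))

/-- `‖f‖_p := max_j ‖f_j‖_{p_j}` for a triple of functions. -/
def tnorm {α : Type*} [MeasureSpace α] (p : Fin 3 → ℝ) (f : Fin 3 → α → ℂ) : ℝ :=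
  tmax fun j => Lnorm (p j) (f j)

/-- The real Gaussian `exp(-γ_j |z|²)` on `ℝ^n`. -/
def gaussER (n : ℕ) (p : Fin 3 → ℝ) (j : Fin 3) : E n → ℝ :=
  fun z => Real.exp (-(γexp p j * ‖z‖ ^ 2))

/-- The Gaussian `g_j(z) = exp(-γ_j |z|²)` on `ℝ^n`, as a complex-valued function. -/
def gaussE (n : ℕ) (p : Fin 3 → ℝ) (j : Fin 3) : E n → ℂ :=
  fun z => Complex.ofReal (gaussER n p j z)

/-- The trilinear form for convolution on `ℝ^n`. -/
def Tconv (n : ℕ) (f : Fin 3 → E n → ℂ) : ℂ :=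
  ∫ x : E n, ∫ y : E n, f 0 x * f 1 y * f 2 (-x - y)

/-- Action of a matrix on `ℝ^n`. -/
def mapp {n : ℕ} (M : Matrix (Fin n) (Fin n) ℝ) (x : E n) : E n :=
  Matrix.toEuclideanLin M x

/-- The (Euclidean) operator norm of a matrix. -/
def opNorm {n : ℕ} (M : Matrix (Fin n) (Fin n) ℝ) : ℝ :=
  ‖LinearMap.toContinuousLinearMap (Matrix.toEuclideanLin M)‖

/-- The standard symplectic form `σ(x,y) = ∑_{j<d} (x_j y_{j+d} - x_{j+d} y_j)` on `ℝ^{2d}`. -/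
def symp (d : ℕ) (x y : E (2 * d)) : ℝ :=
  ∑ j : Fin d, (x ⟨j.1, by have := j.2; omega⟩ * y ⟨j.1 + d, by have := j.2; omega⟩
    - x ⟨j.1 + d, by have := j.2; omega⟩ * y ⟨j.1, by have := j.2; omega⟩)

/-- The matrix `J` with `σ(x,y) = x ⬝ (J y)`. -/
def Jmat (d : ℕ) : Matrix (Fin (2 * d)) (Fin (2 * d)) ℝ :=
  Matrix.of fun i k =>
    if i.1 < d ∧ k.1 = i.1 + d then 1 else if k.1 + d = i.1 then -1 else 0

/-- A symplectic matrix. -/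
def IsSymplectic (d : ℕ) (S : Matrix (Fin (2 * d)) (Fin (2 * d)) ℝ) : Prop :=
  ∀ x y : E (2 * d), symp d (mapp S x) (mapp S y) = symp d x y

/-- The Heisenberg group law `(x,t)·(x',t') = (x+x', t+t'+σ(x,x'))`. -/
def hMul (d : ℕ) (z w : H d) : H d := (z.1 + w.1, z.2 + w.2 + symp d z.1 w.1)

/-- Inversion `(x,t)⁻¹ = (-x,-t)` in the Heisenberg group. -/
def hInv (d : ℕ) (z : H d) : H d := (-z.1, -z.2)

/-- The trilinear form for convolution on the Heisenberg group `ℍ^d`. -/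
def THeis (d : ℕ) (f : Fin 3 → H d → ℂ) : ℂ :=
  ∫ z1 : H d, ∫ z2 : H d, f 0 z1 * f 1 z2 * f 2 (hMul d (hInv d z2) (hInv d z1))

/-- The generators of the symmetry group `Σ(T_{ℍ^d})`: scalings, dilations, translations,
the diagonal action of the symplectic group, shear transformations, and modulations in `x`.
Each family of generators is closed under inversion, so the closure of this set under
composition is exactly the group generated by these symmetries. -/
def heisGens (d : ℕ) : Set (Function.End (Fin 3 → H d → ℂ)) :=
  {Ψ | (∃ a : Fin 3 → ℂ, (∀ j, a j ≠ 0) ∧ Ψ = fun f j z => a j * f j z) ∨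
       (∃ r : ℝ, 0 < r ∧ Ψ = fun f j z => f j (r • z.1, r ^ 2 * z.2)) ∨
       (∃ u : Fin 3 → H d, Ψ = fun f j z => f j (hMul d (hMul d (u j) z) (hInv d (u (j + 1))))) ∨
       (∃ S, IsSymplectic d S ∧ Ψ = fun f j z => f j (mapp S z.1, z.2)) ∨
       (∃ φ : E (2 * d) →ₗ[ℝ] ℝ, Ψ = fun f j z => f j (z.1, z.2 + φ z.1)) ∨
       (∃ u : E (2 * d), Ψ = fun f j z => Complex.exp (Complex.I * Complex.ofReal ⟪u, z.1⟫_ℝ) * f j z)}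

/-- The symmetry group `Σ(T_{ℍ^d})` (as a monoid of transformations; since the generating
set is closed under inversion this coincides with the generated group). -/
def heisSym (d : ℕ) : Submonoid (Function.End (Fin 3 → H d → ℂ)) :=
  Submonoid.closure (heisGens d)

/-- The canonical Gaussian `G(x,t) = exp(-|Lx|² - a t² + i b t)` on `ℍ^d`. -/
def canonGauss (d : ℕ) (L : Matrix (Fin (2 * d)) (Fin (2 * d)) ℝ) (a b : ℝ) : H d → ℂ :=
  fun z => Complex.exp (Complex.ofReal (-(‖mapp L z.1‖ ^ 2) - a * z.2 ^ 2) +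
    Complex.I * Complex.ofReal (b * z.2))

/-- The parameters `(L,a,b)` define a canonical `ε`-diffuse Gaussian. -/
def IsCanonDiffuse (d : ℕ) (ε : ℝ) (L : Matrix (Fin (2 * d)) (Fin (2 * d)) ℝ)
    (a b : ℝ) : Prop :=
  0 < a ∧ IsUnit L.det ∧ max (max a (Real.sqrt a)) b * opNorm L⁻¹ < ε

/-- `G` is an `ε`-diffuse, `p`-compatible ordered triple of Gaussians: `G = Ψ G̃` for a
symmetry `Ψ ∈ Σ(T_{ℍ^d})` and a `p`-compatible triple `G̃` of canonical `ε`-diffuse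
Gaussians, i.e. `G̃_j = exp(-|L_j x|² - a_j t² + i b_j t)` with `L_j = γ_j^{1/2} L`,
`a_j = γ_j a`, `b_j = b`. -/
def IsCompatibleDiffuse (d : ℕ) (p : Fin 3 → ℝ) (ε : ℝ) (G : Fin 3 → H d → ℂ) : Prop :=
  ∃ Ψ ∈ heisSym d, ∃ L : Matrix (Fin (2 * d)) (Fin (2 * d)) ℝ, ∃ a b : ℝ,
    (∀ j, IsCanonDiffuse d ε (Real.sqrt (γexp p j) • L) (γexp p j * a) b) ∧
    G = Ψ (fun j => canonGauss d (Real.sqrt (γexp p j) • L) (γexp p j * a) b)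

/-- The real Gaussian `exp(-γ_j(|x|²+t²))` on `ℝ^{2d} × ℝ`. -/
def gaussHR (d : ℕ) (p : Fin 3 → ℝ) (j : Fin 3) : H d → ℝ :=
  fun z => Real.exp (-(γexp p j * (‖z.1‖ ^ 2 + z.2 ^ 2)))

/-- The Gaussian `g_j(x,t) = exp(-γ_j(|x|²+t²))` on `ℝ^{2d} × ℝ`, complex-valued. -/
def gaussH (d : ℕ) (p : Fin 3 → ℝ) (j : Fin 3) : H d → ℂ :=
  fun z => Complex.ofReal (gaussHR d p j z)

/-- The generalized trilinear form `T(f,A,b)`. -/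
def Tgen (d : ℕ) (f : Fin 3 → H d → ℂ) (A : Matrix (Fin (2 * d)) (Fin (2 * d)) ℝ)
    (b : ℝ) : ℂ :=
  ∫ z1 : H d, ∫ z2 : H d,
    f 0 z1 * f 1 z2 *
      f 2 (-(z1.1 + z2.1), -(z1.2 + z2.2 + symp d (mapp A z1.1) (mapp A z2.1))) *
      Complex.exp (Complex.I * Complex.ofReal (b * symp d (mapp A z1.1) (mapp A z2.1)))

/-- The group law `(x,t)·_A(x',t') = (x+x', t+t'+σ(Ax,Ax'))`. -/
def hMulA (d : ℕ) (A : Matrix (Fin (2 * d)) (Fin (2 * d)) ℝ) (z w : H d) : H d :=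
  (z.1 + w.1, z.2 + w.2 + symp d (mapp A z.1) (mapp A w.1))

/-- The state space on which the symmetries of `T(f,A,b)` act: a triple of functions
together with the attached parameters `(A,b)`. -/
abbrev X (d : ℕ) : Type :=
  (Fin 3 → H d → ℂ) × Matrix (Fin (2 * d)) (Fin (2 * d)) ℝ × ℝ

/-- The generators of `𝔊₀`: the diagonal `GL(2d)` action and modulation in the last
coordinate. Each family is closed under inversion. -/
def G0gens (d : ℕ) : Set (Function.End (X d)) :=
  {Ψ | (∃ L : Matrix (Fin (2 * d)) (Fin (2 * d)) ℝ, IsUnit L.det ∧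
          Ψ = fun s => (fun j z => s.1 j (mapp L z.1, z.2), s.2.1 * L, s.2.2)) ∨
       (∃ ξ : ℝ,
          Ψ = fun s => (fun j z => Complex.exp (Complex.I * Complex.ofReal (ξ * z.2)) * s.1 j z,
            s.2.1, s.2.2 + ξ))}

/-- The group `𝔊₀` (as a monoid of transformations; the generating set is closed under
inversion so this coincides with the generated group). -/
def G0 (d : ℕ) : Submonoid (Function.End (X d)) := Submonoid.closure (G0gens d)

/-- The generators of `𝔊₁`: scalings, dilations, translation–modulation symmetries,
the diagonal symplectic action, shears, and modulations in `x`. -/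
def G1gens (d : ℕ) : Set (Function.End (X d)) :=
  {Ψ | (∃ a : Fin 3 → ℂ, (∀ j, a j ≠ 0) ∧
          Ψ = fun s => (fun j z => a j * s.1 j z, s.2.1, s.2.2)) ∨
       (∃ r : ℝ, 0 < r ∧
          Ψ = fun s => (fun j z => s.1 j (r • z.1, r ^ 2 * z.2), s.2.1, r ^ 2 * s.2.2)) ∨
       (∃ U : Fin 3 → H d,
          Ψ = fun s => (fun j z =>
            (if j = 0 then
                Complex.exp (Complex.I * Complex.ofReal
                  ⟪(-(s.2.2)) • mapp ((s.2.1)ᵀ * Jmat d * s.2.1) ((U 1).1 - (U 2).1), z.1⟫_ℝ)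
             else if j = 1 then
                Complex.exp (Complex.I * Complex.ofReal
                  ⟪(-(s.2.2)) • mapp (((s.2.1)ᵀ * Jmat d * s.2.1)ᵀ) ((U 0).1 - (U 1).1), z.1⟫_ℝ)
             else 1) *
            s.1 j (hMulA d s.2.1 (hMulA d s.2.1 (U j) z) (hInv d (U (j + 1)))),
           s.2.1, s.2.2)) ∨
       (∃ S, IsSymplectic d S ∧
          Ψ = fun s => (fun j z => s.1 j (mapp S z.1, z.2), s.2.1, s.2.2)) ∨
       (∃ φ : E (2 * d) →ₗ[ℝ] ℝ,
          Ψ = fun s => (fun j z => s.1 j (z.1, z.2 + φ z.1), s.2.1, s.2.2)) ∨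
       (∃ u : E (2 * d),
          Ψ = fun s => (fun j z => Complex.exp (Complex.I * Complex.ofReal ⟪u, z.1⟫_ℝ) * s.1 j z,
            s.2.1, s.2.2))}

/-- The group `𝔊₁` (as a monoid of transformations; the generating set is closed under
inversion so this coincides with the generated group). -/
def G1 (d : ℕ) : Submonoid (Function.End (X d)) := Submonoid.closure (G1gens d)

/-- The orbit `Õ(f,A,b)`: all `Ψ₀ Ψ₁ ((e^{-ibt} f) ∘ A⁻¹, Id, 0)` with `Ψ₀ ∈ 𝔊₀`,
`Ψ₁ ∈ 𝔊₁`. -/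
def tildeO (d : ℕ) (f : Fin 3 → H d → ℂ) (A : Matrix (Fin (2 * d)) (Fin (2 * d)) ℝ)
    (b : ℝ) : Set (X d) :=
  {y | ∃ Ψ₀ ∈ G0 d, ∃ Ψ₁ ∈ G1 d,
    y = Ψ₀ (Ψ₁ (fun j z => Complex.exp (-(Complex.I * Complex.ofReal (b * z.2))) *
          f j (mapp A⁻¹ z.1, z.2), 1, 0))}

/-- The squared distance `dist_p(Õ(f,A,b),(g,0,0))²`. -/
def distSq (d : ℕ) (p : Fin 3 → ℝ) (f : Fin 3 → H d → ℂ)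
    (A : Matrix (Fin (2 * d)) (Fin (2 * d)) ℝ) (b : ℝ) : ℝ :=
  sInf ((fun y => (tmax fun j => Lnorm (p j) (y.1 j - gaussH d p j)) ^ 2
      + opNorm ((y.2.1)ᵀ * Jmat d * y.2.1) ^ 2
      + y.2.2 ^ 2 * opNorm ((y.2.1)ᵀ * Jmat d * y.2.1) ^ 2) '' tildeO d f A b)

/-- The group–structure difference form `T'`. -/
def T'op (d : ℕ) (A : Matrix (Fin (2 * d)) (Fin (2 * d)) ℝ) (h : Fin 3 → H d → ℂ) : ℂ :=
  ∫ z1 : H d, ∫ z2 : H d, h 0 z1 * h 1 z2 *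
    (h 2 (-(z1.1 + z2.1), -(z1.2 + z2.2 + symp d (mapp A z1.1) (mapp A z2.1)))
      - h 2 (-(z1.1 + z2.1), -(z1.2 + z2.2)))

/-- The twisting–factor difference form `T''`. -/
def T''op (d : ℕ) (A : Matrix (Fin (2 * d)) (Fin (2 * d)) ℝ) (b : ℝ)
    (h : Fin 3 → H d → ℂ) : ℂ :=
  ∫ z1 : H d, ∫ z2 : H d, h 0 z1 * h 1 z2 *
    h 2 (-(z1.1 + z2.1), -(z1.2 + z2.2 + symp d (mapp A z1.1) (mapp A z2.1))) *
    (Complex.exp (Complex.I * Complex.ofReal (b * symp d (mapp A z1.1) (mapp A z2.1))) - 1)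

/-- The part `f_♯` of `f`: `f_♯(z) = f(z)` when `|f(z)| ≤ η g(z)`, else `0`. -/
def fSharp {α : Type*} (η : ℝ) (gR : α → ℝ) (f : α → ℂ) : α → ℂ :=
  fun z => if ‖f z‖ ≤ η * gR z then f z else 0

/-- The part `f_♭ = f - f_♯`. -/
def fFlat {α : Type*} (η : ℝ) (gR : α → ℝ) (f : α → ℂ) : α → ℂ :=
  fun z => f z - fSharp η gR f z

/-- The generators of the symmetry group of convolution on `ℝ^n`: scalings, translations
(with `v₁+v₂+v₃ = 0`), common modulations, and the diagonal `GL(n)` action. Each family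
is closed under inversion. -/
def euclGens (n : ℕ) : Set (Function.End (Fin 3 → E n → ℂ)) :=
  {Ψ | (∃ a : Fin 3 → ℂ, (∀ j, a j ≠ 0) ∧ Ψ = fun f j x => a j * f j x) ∨
       (∃ v : Fin 3 → E n, v 0 + v 1 + v 2 = 0 ∧ Ψ = fun f j x => f j (x + v j)) ∨
       (∃ ξ : E n, Ψ = fun f j x => Complex.exp (Complex.I * Complex.ofReal ⟪ξ, x⟫_ℝ) * f j x) ∨
       (∃ L : Matrix (Fin n) (Fin n) ℝ, IsUnit L.det ∧ Ψ = fun f j x => f j (mapp L x))}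

/-- The symmetry group of Euclidean convolution (as a monoid of transformations; the
generating set is closed under inversion so this coincides with the generated group). -/
def euclSym (n : ℕ) : Submonoid (Function.End (Fin 3 → E n → ℂ)) :=
  Submonoid.closure (euclGens n)

/-- The orbit `O(f)` of a triple under the symmetries of Euclidean convolution. -/
def euclOrbit (n : ℕ) (f : Fin 3 → E n → ℂ) : Set (Fin 3 → E n → ℂ) :=
  {h | ∃ Ψ ∈ euclSym n, h = Ψ f}

/-- `dist_p(O(f), g) = inf_{h ∈ O(f)} max_j ‖h_j - g_j‖_{p_j}`. -/
def euclDist (n : ℕ) (p : Fin 3 → ℝ) (f : Fin 3 → E n → ℂ) : ℝ :=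
  sInf ((fun h => tmax fun j => Lnorm (p j) (h j - gaussE n p j)) '' euclOrbit n f)

/-- `P` is the family of normalized orthogonal polynomials `P_n^{(t)}`: for `t > 0`,
`P_n^{(t)}` has degree `n`, positive leading coefficient, `‖P_n^{(t)} e^{-tπx²}‖_{L²} = 1`
and `P_n^{(t)} e^{-tπx²} ⊥ P_k^{(t)} e^{-tπx²}` for `k < n`. -/
def IsHermiteFamily (P : ℝ → ℕ → Polynomial ℝ) : Prop :=
  ∀ t : ℝ, 0 < t → ∀ n : ℕ,
    (P t n).degree = n ∧ 0 < (P t n).leadingCoeff ∧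
    (∫ x : ℝ, ((P t n).eval x) ^ 2 * Real.exp (-(2 * t * Real.pi * x ^ 2))) = 1 ∧
    ∀ k : ℕ, k < n →
      (∫ x : ℝ, (P t n).eval x * (P t k).eval x * Real.exp (-(2 * t * Real.pi * x ^ 2))) = 0

/-- `τ_j = p_j p_j' / 2`. -/
def τexp (p : Fin 3 → ℝ) (j : Fin 3) : ℝ := p j * conjExp (p j) / 2

/-- `⟨Re f_j, P_α^{(τ_j)} g_j^{p_j-1}⟩` on `ℝ^{2d+1}`. -/
def pairReE (d : ℕ) (p : Fin 3 → ℝ) (P : ℝ → ℕ → Polynomial ℝ)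
    (f : Fin 3 → E (2 * d + 1) → ℂ) (j : Fin 3) (α : Fin (2 * d + 1) → ℕ) : ℝ :=
  ∫ z : E (2 * d + 1), (f j z).re * (∏ k, (P (τexp p j) (α k)).eval (z k)) *
    (gaussER (2 * d + 1) p j z) ^ (p j - 1)

/-- `⟨Im f_j, P_α^{(τ_j)} g_j^{p_j-1}⟩` on `ℝ^{2d+1}`. -/
def pairImE (d : ℕ) (p : Fin 3 → ℝ) (P : ℝ → ℕ → Polynomial ℝ)
    (f : Fin 3 → E (2 * d + 1) → ℂ) (j : Fin 3) (α : Fin (2 * d + 1) → ℕ) : ℝ :=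
  ∫ z : E (2 * d + 1), (f j z).im * (∏ k, (P (τexp p j) (α k)).eval (z k)) *
    (gaussER (2 * d + 1) p j z) ^ (p j - 1)

/-- The orthogonality conditions of the sharpened Young inequality, on `ℝ^{2d+1}`. -/
def OrthCondsE (d : ℕ) (p : Fin 3 → ℝ) (P : ℝ → ℕ → Polynomial ℝ)
    (f : Fin 3 → E (2 * d + 1) → ℂ) : Prop :=
  (∀ j, pairReE d p P f j 0 = 0 ∧ pairImE d p P f j 0 = 0) ∧
  (∀ α : Fin (2 * d + 1) → ℕ, (∑ k, α k) = 1 →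
      pairReE d p P f 0 α = 0 ∧ pairReE d p P f 1 α = 0 ∧ pairImE d p P f 2 α = 0) ∧
  (∀ α : Fin (2 * d + 1) → ℕ, (∑ k, α k) = 2 → pairReE d p P f 2 α = 0)

/-- The `k`-th coordinate of a point of `ℝ^{2d} × ℝ`, viewed as a point of `ℝ^{2d+1}`. -/
def coordH (d : ℕ) (z : H d) (k : Fin (2 * d + 1)) : ℝ :=
  if h : (k : ℕ) < 2 * d then z.1 ⟨k, h⟩ else z.2

/-- `⟨Re f_j, P_α^{(τ_j)} g_j^{p_j-1}⟩` on `ℝ^{2d} × ℝ ≅ ℝ^{2d+1}`. -/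
def pairReH (d : ℕ) (p : Fin 3 → ℝ) (P : ℝ → ℕ → Polynomial ℝ)
    (f : Fin 3 → H d → ℂ) (j : Fin 3) (α : Fin (2 * d + 1) → ℕ) : ℝ :=
  ∫ z : H d, (f j z).re * (∏ k, (P (τexp p j) (α k)).eval (coordH d z k)) *
    (gaussHR d p j z) ^ (p j - 1)

/-- `⟨Im f_j, P_α^{(τ_j)} g_j^{p_j-1}⟩` on `ℝ^{2d} × ℝ ≅ ℝ^{2d+1}`. -/
def pairImH (d : ℕ) (p : Fin 3 → ℝ) (P : ℝ → ℕ → Polynomial ℝ)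
    (f : Fin 3 → H d → ℂ) (j : Fin 3) (α : Fin (2 * d + 1) → ℕ) : ℝ :=
  ∫ z : H d, (f j z).im * (∏ k, (P (τexp p j) (α k)).eval (coordH d z k)) *
    (gaussHR d p j z) ^ (p j - 1)

/-- The orthogonality conditions, on `ℝ^{2d} × ℝ ≅ ℝ^{2d+1}`. -/
def OrthCondsH (d : ℕ) (p : Fin 3 → ℝ) (P : ℝ → ℕ → Polynomial ℝ)
    (f : Fin 3 → H d → ℂ) : Prop :=
  (∀ j, pairReH d p P f j 0 = 0 ∧ pairImH d p P f j 0 = 0) ∧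
  (∀ α : Fin (2 * d + 1) → ℕ, (∑ k, α k) = 1 →
      pairReH d p P f 0 α = 0 ∧ pairReH d p P f 1 α = 0 ∧ pairImH d p P f 2 α = 0) ∧
  (∀ α : Fin (2 * d + 1) → ℕ, (∑ k, α k) = 2 → pairReH d p P f 2 α = 0)



/-! ### Auxiliary lemmas for Statement 10 -/

/-- The weight `w(z) = ‖x‖(2|t|+‖x‖+1)`. -/
def wt (d : ℕ) (z : H d) : ℝ := ‖z.1‖ * (2 * |z.2| + ‖z.1‖ + 1)

lemma wt_nonneg (d : ℕ) (z : H d) : 0 ≤ wt d z :=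
  mul_nonneg (norm_nonneg _) (by positivity)

lemma wt_continuous (d : ℕ) : Continuous (wt d) :=
  (continuous_fst.norm).mul
    (((continuous_const.mul continuous_snd.abs).add continuous_fst.norm).add continuous_const)

lemma wt_le (d : ℕ) (z : H d) : wt d z ≤ 2 * Real.exp (2 * ‖z.1‖ + |z.2|) := by
  set s := ‖z.1‖ with hs'
  set u := |z.2| with hu'
  have hs : 0 ≤ s := norm_nonneg _
  have hu : 0 ≤ u := abs_nonneg _
  have h1 : s ≤ Real.exp s := by linarith [Real.add_one_le_exp s]
  have h2 : s + 1 ≤ Real.exp s := by linarith [Real.add_one_le_exp s]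
  have h3 : u + 1 ≤ Real.exp u := by linarith [Real.add_one_le_exp u]
  have h4 : (2 * u + s + 1) ≤ 2 * ((u + 1) * (s + 1)) := by nlinarith
  have h5 : (u + 1) * (s + 1) ≤ Real.exp u * Real.exp s :=
    mul_le_mul h3 h2 (by linarith) (Real.exp_pos _).le
  calc wt d z = s * (2 * u + s + 1) := rfl
    _ ≤ Real.exp s * (2 * ((u + 1) * (s + 1))) :=
        mul_le_mul h1 h4 (by positivity) (Real.exp_pos _).le
    _ ≤ Real.exp s * (2 * (Real.exp u * Real.exp s)) := by
        have := mul_le_mul_of_nonneg_left h5 (by norm_num : (0:ℝ) ≤ 2)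
        exact mul_le_mul_of_nonneg_left this (Real.exp_pos _).le
    _ = 2 * Real.exp (2 * s + u) := by
        rw [show Real.exp s * (2 * (Real.exp u * Real.exp s))
            = 2 * (Real.exp s * Real.exp s * Real.exp u) from by ring,
          ← Real.exp_add, ← Real.exp_add]
        congr 1
        ring

lemma abs_exp_neg_sub_exp_neg_le {a b : ℝ} (ha : 0 ≤ a) (hb : 0 ≤ b) :
    |Real.exp (-a) - Real.exp (-b)| ≤ |a - b| := by
  wlog h : b ≤ a generalizing a b
  · rw [abs_sub_comm, abs_sub_comm a b]; exact this hb ha (le_of_not_ge h)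
  · have h1 := Real.add_one_le_exp (b - a)
    have h2 : Real.exp (-b) ≤ 1 := Real.exp_le_one_iff.2 (by linarith)
    have h3 : Real.exp (-a) = Real.exp (-b) * Real.exp (b - a) := by
      rw [← Real.exp_add]; ring_nf
    have h4 : Real.exp (b - a) ≤ 1 := Real.exp_le_one_iff.2 (by linarith)
    rw [abs_of_nonpos (by nlinarith [Real.exp_pos (-b)]), abs_of_nonneg (by linarith)]
    nlinarith [Real.exp_pos (-b)]

lemma mapp_mapp {n : ℕ} (M N : Matrix (Fin n) (Fin n) ℝ) (x : E n) :
    mapp M (mapp N x) = mapp (M * N) x := by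
  simp [mapp, Matrix.toEuclideanLin_apply, Matrix.mulVec_mulVec]

lemma norm_mapp_le {n : ℕ} (M : Matrix (Fin n) (Fin n) ℝ) (x : E n) :
    ‖mapp M x‖ ≤ opNorm M * ‖x‖ :=
  (LinearMap.toContinuousLinearMap (Matrix.toEuclideanLin M)).le_opNorm x

lemma opNorm_nonneg' {n : ℕ} (M : Matrix (Fin n) (Fin n) ℝ) : 0 ≤ opNorm M := norm_nonneg _

lemma inner_mapp {n : ℕ} (M : Matrix (Fin n) (Fin n) ℝ) (x y : E n) :
    ⟪mapp M x, y⟫_ℝ = ⟪x, mapp Mᵀ y⟫_ℝ := by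
  have hT : Mᵀ = Mᴴ := by
    ext i j; simp [Matrix.conjTranspose_apply]
  rw [hT]
  simp only [mapp, Matrix.toEuclideanLin_conjTranspose_eq_adjoint]
  rw [LinearMap.adjoint_inner_right]

lemma mapp_coord {n : ℕ} (M : Matrix (Fin n) (Fin n) ℝ) (x : E n) (i : Fin n) :
    mapp M x i = ∑ k, M i k * x k := rfl

lemma symp_eq_inner (d : ℕ) (x y : E (2 * d)) : symp d x y = ⟪x, mapp (Jmat d) y⟫_ℝ := by
  have hinner : ⟪x, mapp (Jmat d) y⟫_ℝ = ∑ i, x i * (∑ k, Jmat d i k * y k) := by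
    simp [PiLp.inner_apply, RCLike.inner_apply, mapp_coord]
    exact Finset.sum_congr rfl fun i _ => mul_comm _ _
  rw [hinner]
  have hrow : ∀ i : Fin (2 * d), (∑ k, Jmat d i k * y k) =
      if h : (i : ℕ) < d then y ⟨i.1 + d, by omega⟩ else - y ⟨i.1 - d, by omega⟩ := by
    intro i
    by_cases h : (i : ℕ) < d
    · rw [dif_pos h, Finset.sum_eq_single (⟨i.1 + d, by omega⟩ : Fin (2 * d))]
      · simp [Jmat, h]
      · intro k _ hk
        have h1 : ¬((i : ℕ) < d ∧ (k : ℕ) = i.1 + d) := by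
          rintro ⟨_, hk2⟩; exact hk (Fin.ext hk2)
        have h2 : ¬((k : ℕ) + d = i.1) := by omega
        simp only [Jmat, Matrix.of_apply, if_neg h1, if_neg h2, zero_mul]
      · intro habs; exact absurd (Finset.mem_univ _) habs
    · rw [dif_neg h, Finset.sum_eq_single (⟨i.1 - d, by omega⟩ : Fin (2 * d))]
      · have h1 : ¬((i : ℕ) < d ∧ (i.1 - d : ℕ) = i.1 + d) := by omega
        have h2 : (i.1 - d) + d = i.1 := by omega
        simp only [Jmat, Matrix.of_apply, if_neg h1, if_pos h2, neg_one_mul]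
      · intro k _ hk
        have h1 : ¬((i : ℕ) < d ∧ (k : ℕ) = i.1 + d) := fun hc => h hc.1
        have h2 : ¬((k : ℕ) + d = i.1) := fun hc =>
          hk (Fin.ext (show (k : ℕ) = i.1 - d by omega))
        simp only [Jmat, Matrix.of_apply, if_neg h1, if_neg h2, zero_mul]
      · intro habs; exact absurd (Finset.mem_univ _) habs
  simp_rw [hrow]
  rw [← (finCongr (two_mul d).symm).sum_comp (fun i : Fin (2*d) =>
      x i * if h : (i : ℕ) < d then y ⟨i.1 + d, by omega⟩ else - y ⟨i.1 - d, by omega⟩)]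
  rw [Fin.sum_univ_add]
  unfold symp
  rw [Finset.sum_sub_distrib, sub_eq_add_neg, ← Finset.sum_neg_distrib]
  congr 1
  · apply Finset.sum_congr rfl
    intro j _
    rw [dif_pos (show ((finCongr (two_mul d).symm (Fin.castAdd d j) : Fin (2*d)) : ℕ) < d
      from j.2)]
    rfl
  · apply Finset.sum_congr rfl
    intro j _
    have h1 : (finCongr (two_mul d).symm (Fin.natAdd d j) : Fin (2*d)) = ⟨j.1 + d, by omega⟩ :=
      Fin.ext (show d + j.1 = j.1 + d by omega)
    rw [h1, dif_neg (show ¬((⟨j.1 + d, by omega⟩ : Fin (2*d)) : ℕ) < d from by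
      simp)]
    have h2 : ((⟨(⟨j.1 + d, by omega⟩ : Fin (2*d)).1 - d, by omega⟩ : Fin (2*d)))
        = ⟨j.1, by omega⟩ := Fin.ext (show j.1 + d - d = j.1 by omega)
    rw [h2, mul_neg]

lemma abs_symp_mapp_le (d : ℕ) (A : Matrix (Fin (2*d)) (Fin (2*d)) ℝ) (x y : E (2*d)) :
    |symp d (mapp A x) (mapp A y)| ≤ opNorm (Aᵀ * Jmat d * A) * (‖x‖ * ‖y‖) := by
  rw [symp_eq_inner, inner_mapp, mapp_mapp, mapp_mapp]
  calc |⟪x, mapp (Aᵀ * Jmat d * A) y⟫_ℝ| ≤ ‖x‖ * ‖mapp (Aᵀ * Jmat d * A) y‖ :=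
        abs_real_inner_le_norm _ _
    _ ≤ ‖x‖ * (opNorm (Aᵀ * Jmat d * A) * ‖y‖) :=
        mul_le_mul_of_nonneg_left (norm_mapp_le _ _) (norm_nonneg _)
    _ = opNorm (Aᵀ * Jmat d * A) * (‖x‖ * ‖y‖) := by ring

lemma integrable_exp_neg_mul_sq_norm {n : ℕ} {c : ℝ} (hc : 0 < c) :
    Integrable (fun x : E n => Real.exp (-c * ‖x‖ ^ 2)) := by
  have h := (GaussianFourier.integrable_cexp_neg_mul_sq_norm_add (V := E n)
      (b := (c : ℂ)) (by simpa using hc) 0 0).norm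
  refine h.congr (Filter.Eventually.of_forall fun v => ?_)
  simp only [Complex.norm_exp]
  have hcast : (-(c:ℂ) * (‖v‖ : ℂ) ^ 2 + 0 * (⟪0, v⟫_ℝ : ℂ)) = ((-c * ‖v‖ ^ 2 : ℝ) : ℂ) := by
    push_cast; ring
  rw [hcast, Complex.ofReal_re]

lemma integrable_master {n : ℕ} {c : ℝ} (hc : 0 < c) (a b : ℝ) :
    Integrable (fun z : E n × ℝ =>
      Real.exp (a * ‖z.1‖ + b * |z.2| - c * (‖z.1‖ ^ 2 + z.2 ^ 2))) := by
  have h1 : Integrable (fun x : E n => Real.exp (a * ‖x‖ - c * ‖x‖ ^ 2)) := by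
    have hbase : Integrable (fun x : E n =>
        Real.exp (a ^ 2 / (2 * c)) * Real.exp (-(c / 2) * ‖x‖ ^ 2)) :=
      (integrable_exp_neg_mul_sq_norm (half_pos hc)).const_mul _
    refine hbase.mono' ((Real.continuous_exp.comp ((continuous_const.mul continuous_norm).sub
      (continuous_const.mul (continuous_norm.pow 2)))).aestronglyMeasurable)
      (Filter.Eventually.of_forall fun x => ?_)
    rw [Real.norm_eq_abs, abs_of_pos (Real.exp_pos _), ← Real.exp_add]
    apply Real.exp_le_exp.2
    have h2 : 0 < 2 * c := by linarith
    rw [div_add' _ _ _ (ne_of_gt h2), le_div_iff₀ h2]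
    nlinarith [sq_nonneg (a - c * ‖x‖)]
  have h2 : Integrable (fun t : ℝ => Real.exp (b * |t| - c * t ^ 2)) := by
    have hbase : Integrable (fun t : ℝ =>
        Real.exp (b ^ 2 / (2 * c)) * Real.exp (-(c / 2) * t ^ 2)) :=
      (integrable_exp_neg_mul_sq (half_pos hc)).const_mul _
    refine hbase.mono' ((Real.continuous_exp.comp ((continuous_const.mul
      continuous_abs).sub (continuous_const.mul (continuous_pow 2)))).aestronglyMeasurable)
      (Filter.Eventually.of_forall fun t => ?_)
    rw [Real.norm_eq_abs, abs_of_pos (Real.exp_pos _), ← Real.exp_add]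
    apply Real.exp_le_exp.2
    have h2 : 0 < 2 * c := by linarith
    rw [div_add' _ _ _ (ne_of_gt h2), le_div_iff₀ h2]
    have ht : c ^ 2 * |t| ^ 2 = c ^ 2 * t ^ 2 := by rw [sq_abs]
    nlinarith [sq_nonneg (b - c * |t|), ht]
  have h3 := h1.mul_prod h2
  rw [← MeasureTheory.Measure.volume_eq_prod] at h3
  refine h3.congr (Filter.Eventually.of_forall fun z => ?_)
  show Real.exp _ * Real.exp _ = Real.exp _
  rw [← Real.exp_add]
  congr 1
  ring

lemma memℒp_of_integrable_rpow {α : Type*} [MeasureSpace α] {f : α → ℝ} {q : ℝ}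
    (hq : 0 < q) (hf : AEStronglyMeasurable f volume) (hnn : ∀ z, 0 ≤ f z)
    (hint : Integrable (fun z => f z ^ q)) : MemLp f (ENNReal.ofReal q) volume := by
  have hiff := memLp_norm_rpow_iff (q := ENNReal.ofReal q) (p := ENNReal.ofReal q) hf
    (by simpa using hq) ENNReal.ofReal_ne_top
  rw [ENNReal.div_self (by simpa using hq) ENNReal.ofReal_ne_top] at hiff
  refine hiff.1 ?_
  rw [memLp_one_iff_integrable]
  refine hint.congr (Filter.Eventually.of_forall fun z => ?_)
  simp [ENNReal.toReal_ofReal hq.le, Real.norm_eq_abs, abs_of_nonneg (hnn z)]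

lemma γexp_pos {p : Fin 3 → ℝ} (hp : IsAdmissible p) (j : Fin 3) : 0 < γexp p j := by
  have h := hp.1 j
  have h2 : 0 < conjExp (p j) := div_pos (by linarith) (by linarith)
  exact mul_pos Real.pi_pos h2

lemma gaussHR_pos (d : ℕ) (p : Fin 3 → ℝ) (j : Fin 3) (z : H d) : 0 < gaussHR d p j z :=
  Real.exp_pos _

lemma gaussHR_continuous (d : ℕ) (p : Fin 3 → ℝ) (j : Fin 3) :
    Continuous (gaussHR d p j) :=
  Real.continuous_exp.comp ((continuous_const.mul
    ((continuous_fst.norm.pow 2).add (continuous_snd.pow 2))).neg)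

lemma norm_fSharp_le_norm {α : Type*} (η : ℝ) (g : α → ℝ) (f : α → ℂ) (z : α) :
    ‖fSharp η g f z‖ ≤ ‖f z‖ := by
  unfold fSharp
  split
  · exact le_refl _
  · simp

lemma norm_fSharp_le_g {α : Type*} {η : ℝ} (hη : 0 < η) {g : α → ℝ}
    (hg : ∀ z, 0 < g z) (f : α → ℂ) (z : α) : ‖fSharp η g f z‖ ≤ η * g z := by
  unfold fSharp
  split
  · assumption
  · simp only [norm_zero]
    exact le_of_lt (mul_pos hη (hg z))

lemma fSharp_aestronglyMeasurable {α : Type*} [MeasureSpace α] [TopologicalSpace α]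
    [OpensMeasurableSpace α] {η : ℝ} {g : α → ℝ} (hg : Continuous g)
    {f : α → ℂ} (hf : AEStronglyMeasurable f volume) :
    AEStronglyMeasurable (fSharp η g f) volume := by
  classical
  obtain ⟨f', hf', hae⟩ := hf
  refine ⟨fun z => if ‖f' z‖ ≤ η * g z then f' z else 0, ?_, ?_⟩
  · exact StronglyMeasurable.ite
      (measurableSet_le hf'.norm.measurable ((hg.measurable).const_mul η)) hf'
      stronglyMeasurable_const
  · filter_upwards [hae] with z hz
    simp [fSharp, hz]

lemma Lnorm_nonneg {α : Type*} [MeasureSpace α] (q : ℝ) (f : α → ℂ) : 0 ≤ Lnorm q f :=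
  Real.rpow_nonneg (integral_nonneg fun z => Real.rpow_nonneg (norm_nonneg _) _) _

lemma arith_key {M x1 x2 u1 u2 S B : ℝ} (hM : 0 ≤ M) (hx1 : 0 ≤ x1) (hx2 : 0 ≤ x2)
    (hu1 : 0 ≤ u1) (hu2 : 0 ≤ u2) (hS0 : 0 ≤ S) (hS1 : S ≤ M * (x1 * x2))
    (hS2 : S ≤ x1 * x2) (hB0 : 0 ≤ B) (hB : B ≤ 2 * u1 + 2 * u2 + S) :
    S * B ≤ M * ((x1 * (2 * u1 + x1 + 1)) * (x2 * (2 * u2 + x2 + 1))) := by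
  have hMxy : 0 ≤ M * (x1 * x2) := mul_nonneg hM (mul_nonneg hx1 hx2)
  have hfac : 2 * u1 + 2 * u2 + x1 * x2 ≤ (2 * u1 + x1 + 1) * (2 * u2 + x2 + 1) := by
    nlinarith [mul_nonneg hu1 hu2, mul_nonneg hu1 hx2, mul_nonneg hu2 hx1,
      mul_nonneg hx1 hx2]
  calc S * B ≤ (M * (x1 * x2)) * (2 * u1 + 2 * u2 + x1 * x2) :=
        mul_le_mul hS1 (by linarith) hB0 hMxy
    _ ≤ (M * (x1 * x2)) * ((2 * u1 + x1 + 1) * (2 * u2 + x2 + 1)) :=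
        mul_le_mul_of_nonneg_left hfac hMxy
    _ = M * ((x1 * (2 * u1 + x1 + 1)) * (x2 * (2 * u2 + x2 + 1))) := by ring

/-- The Hölder estimate for a single sharp-truncated function. -/
lemma holder_piece (d : ℕ) (p : Fin 3 → ℝ) (hp : IsAdmissible p) (η : ℝ)
    (hη : η ∈ Set.Ioo (0:ℝ) 1) (j : Fin 3) :
    ∃ C : ℝ, 0 ≤ C ∧ ∀ f : H d → ℂ, MemLp f (ENNReal.ofReal (p j)) volume →
      Integrable (fun z : H d => ‖fSharp η (gaussHR d p j) f z‖ * wt d z) ∧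
      (∫ z : H d, ‖fSharp η (gaussHR d p j) f z‖ * wt d z)
        ≤ C * Lnorm (p j) f ^ (3/4 : ℝ) := by
  have hηpos : 0 < η := hη.1
  have hpj : 1 < p j := hp.1 j
  have hγ : 0 < γexp p j := γexp_pos hp j
  set γ := γexp p j with hγdef
  set q : ℝ := 4 * p j / 3 with hqdef
  have hq1 : 1 < q := by rw [hqdef]; linarith
  set q' : ℝ := Real.conjExponent q with hq'def
  have hconj : q.HolderConjugate q' := Real.HolderConjugate.conjExponent hq1
  have hq'pos : 0 < q' := hconj.symm.pos
  set v : H d → ℝ := fun z => (η * gaussHR d p j z) ^ ((1:ℝ)/4) * wt d z with hvdef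
  have hg_cont : Continuous (gaussHR d p j) := gaussHR_continuous d p j
  have hg_pos : ∀ z, 0 < gaussHR d p j z := gaussHR_pos d p j
  have hw_cont : Continuous (wt d) := wt_continuous d
  have hv_cont : Continuous v := ((continuous_const.mul hg_cont).rpow_const
      (fun z => Or.inr (by norm_num))).mul hw_cont
  have hv_nonneg : ∀ z, 0 ≤ v z := fun z =>
    mul_nonneg (Real.rpow_nonneg (le_of_lt (mul_pos hηpos (hg_pos z))) _) (wt_nonneg d z)
  -- v is a fixed continuous Gaussian-type majorant; `v ^ q'` is integrable
  have hv_le : ∀ z : H d, v z ≤ (2 * η ^ ((1:ℝ)/4)) *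
      Real.exp (2 * ‖z.1‖ + |z.2| - (γ/4) * (‖z.1‖ ^ 2 + z.2 ^ 2)) := by
    intro z
    have h1 : (η * gaussHR d p j z) ^ ((1:ℝ)/4)
        = η ^ ((1:ℝ)/4) * Real.exp (-((γ/4) * (‖z.1‖ ^ 2 + z.2 ^ 2))) := by
      rw [Real.mul_rpow hηpos.le (hg_pos z).le]
      congr 1
      show Real.exp (-(γ * (‖z.1‖ ^ 2 + z.2 ^ 2))) ^ ((1:ℝ)/4) = _
      rw [← Real.exp_mul]
      congr 1
      ring
    calc v z = η ^ ((1:ℝ)/4) * Real.exp (-((γ/4) * (‖z.1‖ ^ 2 + z.2 ^ 2))) * wt d z := by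
          show (η * gaussHR d p j z) ^ ((1:ℝ)/4) * wt d z = _
          rw [h1]
      _ ≤ η ^ ((1:ℝ)/4) * Real.exp (-((γ/4) * (‖z.1‖ ^ 2 + z.2 ^ 2)))
            * (2 * Real.exp (2 * ‖z.1‖ + |z.2|)) := by
          refine mul_le_mul_of_nonneg_left (wt_le d z) ?_
          positivity
      _ = (2 * η ^ ((1:ℝ)/4)) *
            Real.exp (2 * ‖z.1‖ + |z.2| - (γ/4) * (‖z.1‖ ^ 2 + z.2 ^ 2)) := by
          rw [show η ^ ((1:ℝ)/4) * Real.exp (-((γ/4) * (‖z.1‖ ^ 2 + z.2 ^ 2)))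
              * (2 * Real.exp (2 * ‖z.1‖ + |z.2|)) = (2 * η ^ ((1:ℝ)/4)) *
              (Real.exp (-((γ/4) * (‖z.1‖ ^ 2 + z.2 ^ 2)))
                * Real.exp (2 * ‖z.1‖ + |z.2|)) from by ring, ← Real.exp_add]
          congr 2
          ring
  have hv_rq_int : Integrable (fun z : H d => v z ^ q') := by
    have hcpos : 0 < γ * q' / 4 := by positivity
    have hmaster := (integrable_master (n := 2*d) hcpos (2*q') q').const_mul
      ((2 * η ^ ((1:ℝ)/4)) ^ q')
    refine hmaster.mono' ((hv_cont.rpow_const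
      (fun z => Or.inr hq'pos.le)).aestronglyMeasurable)
      (Filter.Eventually.of_forall fun z => ?_)
    rw [Real.norm_eq_abs, abs_of_nonneg (Real.rpow_nonneg (hv_nonneg z) _)]
    calc v z ^ q' ≤ ((2 * η ^ ((1:ℝ)/4)) *
          Real.exp (2 * ‖z.1‖ + |z.2| - (γ/4) * (‖z.1‖ ^ 2 + z.2 ^ 2))) ^ q' :=
        Real.rpow_le_rpow (hv_nonneg z) (hv_le z) hq'pos.le
      _ = (2 * η ^ ((1:ℝ)/4)) ^ q' *
          Real.exp (2 * q' * ‖z.1‖ + q' * |z.2| - γ * q' / 4 * (‖z.1‖ ^ 2 + z.2 ^ 2)) := by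
        rw [Real.mul_rpow (by positivity) (Real.exp_pos _).le, ← Real.exp_mul]
        congr 2
        ring
  have hvMem : MemLp v (ENNReal.ofReal q') volume :=
    memℒp_of_integrable_rpow hq'pos hv_cont.aestronglyMeasurable hv_nonneg hv_rq_int
  have hCnn : 0 ≤ (∫ z : H d, v z ^ q') ^ ((1:ℝ)/q') :=
    Real.rpow_nonneg (integral_nonneg fun z => Real.rpow_nonneg (hv_nonneg z) _) _
  refine ⟨(∫ z : H d, v z ^ q') ^ ((1:ℝ)/q'), hCnn, ?_⟩
  intro f hf
  set F := fSharp η (gaussHR d p j) f with hFdef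
  have hF_asm : AEStronglyMeasurable F volume := fSharp_aestronglyMeasurable hg_cont hf.1
  have hF_le_f : ∀ z, ‖F z‖ ≤ ‖f z‖ := norm_fSharp_le_norm η _ f
  have hF_le_g : ∀ z, ‖F z‖ ≤ η * gaussHR d p j z := norm_fSharp_le_g hηpos hg_pos f
  constructor
  · -- integrability of the weighted truncation
    have hdom : Integrable (fun z : H d =>
        (2 * η) * Real.exp (2 * ‖z.1‖ + 1 * |z.2| - γ * (‖z.1‖ ^ 2 + z.2 ^ 2))) :=
      (integrable_master hγ 2 1).const_mul _
    refine hdom.mono' (hF_asm.norm.mul hw_cont.aestronglyMeasurable)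
      (Filter.Eventually.of_forall fun z => ?_)
    rw [Real.norm_eq_abs, abs_of_nonneg (mul_nonneg (norm_nonneg _) (wt_nonneg d z))]
    calc ‖F z‖ * wt d z
        ≤ (η * gaussHR d p j z) * (2 * Real.exp (2 * ‖z.1‖ + |z.2|)) :=
          mul_le_mul (hF_le_g z) (wt_le d z) (wt_nonneg d z)
            (le_of_lt (mul_pos hηpos (hg_pos z)))
      _ = (2 * η) * Real.exp (2 * ‖z.1‖ + 1 * |z.2| - γ * (‖z.1‖ ^ 2 + z.2 ^ 2)) := by
          show η * Real.exp (-(γ * (‖z.1‖ ^ 2 + z.2 ^ 2)))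
              * (2 * Real.exp (2 * ‖z.1‖ + |z.2|)) = _
          rw [show η * Real.exp (-(γ * (‖z.1‖ ^ 2 + z.2 ^ 2)))
              * (2 * Real.exp (2 * ‖z.1‖ + |z.2|)) = (2 * η) *
              (Real.exp (-(γ * (‖z.1‖ ^ 2 + z.2 ^ 2)))
                * Real.exp (2 * ‖z.1‖ + |z.2|)) from by ring, ← Real.exp_add]
          congr 2
          ring
  · -- the Hölder bound
    set U : H d → ℝ := fun z => ‖F z‖ ^ ((3:ℝ)/4) with hUdef
    set V : H d → ℝ := fun z => ‖F z‖ ^ ((1:ℝ)/4) * wt d z with hVdef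
    have hUV : ∀ z, ‖F z‖ * wt d z = U z * V z := by
      intro z
      rw [hUdef, hVdef]
      show ‖F z‖ * wt d z = ‖F z‖ ^ ((3:ℝ)/4) * (‖F z‖ ^ ((1:ℝ)/4) * wt d z)
      rw [← mul_assoc, ← Real.rpow_add' (norm_nonneg _)
        (by norm_num : (3:ℝ)/4 + 1/4 ≠ 0)]
      norm_num
    have hFMem : MemLp F (ENNReal.ofReal (p j)) volume :=
      hf.of_le hF_asm (Filter.Eventually.of_forall fun z => by
        simpa using hF_le_f z)
    have hUMem : MemLp U (ENNReal.ofReal q) volume := by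
      have h34 : (0:ℝ) < 3/4 := by norm_num
      have hh := hFMem.norm_rpow_div (ENNReal.ofReal ((3:ℝ)/4))
      rw [ENNReal.toReal_ofReal h34.le, ← ENNReal.ofReal_div_of_pos h34,
        show p j / ((3:ℝ)/4) = q by rw [hqdef]; ring] at hh
      exact hh
    have hVle : ∀ z, V z ≤ v z := by
      intro z
      rw [hVdef, hvdef]
      exact mul_le_mul_of_nonneg_right
        (Real.rpow_le_rpow (norm_nonneg _) (hF_le_g z) (by norm_num)) (wt_nonneg d z)
    have hV_nonneg : ∀ z, 0 ≤ V z := fun z =>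
      mul_nonneg (Real.rpow_nonneg (norm_nonneg _) _) (wt_nonneg d z)
    have hV_asm : AEStronglyMeasurable V volume :=
      ((hF_asm.norm.aemeasurable.pow_const ((1:ℝ)/4)).aestronglyMeasurable).mul
        hw_cont.aestronglyMeasurable
    have hVMem : MemLp V (ENNReal.ofReal q') volume :=
      hvMem.of_le hV_asm (Filter.Eventually.of_forall fun z => by
        rw [Real.norm_eq_abs, Real.norm_eq_abs, abs_of_nonneg (hV_nonneg z),
          abs_of_nonneg (hv_nonneg z)]
        exact hVle z)
    have hHolder := MeasureTheory.integral_mul_le_Lp_mul_Lq_of_nonneg hconj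
      (Filter.Eventually.of_forall fun z => Real.rpow_nonneg (norm_nonneg _) _)
      (Filter.Eventually.of_forall fun z => hV_nonneg z) hUMem hVMem
    have hfnorm_int : Integrable (fun z : H d => ‖f z‖ ^ (p j)) := by
      have hh := hf.integrable_norm_rpow (by simpa using (by linarith : (0:ℝ) < p j))
        ENNReal.ofReal_ne_top
      rwa [ENNReal.toReal_ofReal (by linarith : (0:ℝ) ≤ p j)] at hh
    have hfac1 : (∫ z : H d, U z ^ q) ^ ((1:ℝ)/q) ≤ Lnorm (p j) f ^ ((3:ℝ)/4) := by
      have hUq : ∀ z, U z ^ q = ‖F z‖ ^ (p j) := by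
        intro z
        show (‖F z‖ ^ ((3:ℝ)/4)) ^ q = ‖F z‖ ^ (p j)
        rw [← Real.rpow_mul (norm_nonneg _)]
        congr 1
        rw [hqdef]; ring
      have hmono : (∫ z : H d, U z ^ q) ≤ ∫ z : H d, ‖f z‖ ^ (p j) := by
        refine integral_mono_of_nonneg
          (Filter.Eventually.of_forall fun z =>
            Real.rpow_nonneg (Real.rpow_nonneg (norm_nonneg _) _) _)
          hfnorm_int (Filter.Eventually.of_forall fun z => ?_)
        show U z ^ q ≤ ‖f z‖ ^ (p j)
        rw [hUq z]
        exact Real.rpow_le_rpow (norm_nonneg _) (hF_le_f z) (by linarith)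
      have hXnn : 0 ≤ ∫ z : H d, ‖f z‖ ^ (p j) :=
        integral_nonneg fun z => Real.rpow_nonneg (norm_nonneg _) _
      calc (∫ z : H d, U z ^ q) ^ ((1:ℝ)/q)
          ≤ (∫ z : H d, ‖f z‖ ^ (p j)) ^ ((1:ℝ)/q) :=
            Real.rpow_le_rpow (integral_nonneg fun z =>
              Real.rpow_nonneg (Real.rpow_nonneg (norm_nonneg _) _) _) hmono
              (by positivity)
        _ = Lnorm (p j) f ^ ((3:ℝ)/4) := by
            rw [Lnorm, ← Real.rpow_mul hXnn]
            congr 1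
            rw [hqdef]
            field_simp
    have hfac2 : (∫ z : H d, V z ^ q') ^ ((1:ℝ)/q')
        ≤ (∫ z : H d, v z ^ q') ^ ((1:ℝ)/q') := by
      refine Real.rpow_le_rpow (integral_nonneg fun z =>
        Real.rpow_nonneg (hV_nonneg z) _) ?_ (by positivity)
      exact integral_mono_of_nonneg
        (Filter.Eventually.of_forall fun z => Real.rpow_nonneg (hV_nonneg z) _)
        hv_rq_int (Filter.Eventually.of_forall fun z =>
          Real.rpow_le_rpow (hV_nonneg z) (hVle z) hq'pos.le)
    calc (∫ z : H d, ‖F z‖ * wt d z) = ∫ z : H d, U z * V z :=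
          integral_congr_ae (Filter.Eventually.of_forall fun z => hUV z)
      _ ≤ (∫ z : H d, U z ^ q) ^ ((1:ℝ)/q) * (∫ z : H d, V z ^ q') ^ ((1:ℝ)/q') := by
          simpa using hHolder
      _ ≤ Lnorm (p j) f ^ ((3:ℝ)/4) * (∫ z : H d, v z ^ q') ^ ((1:ℝ)/q') :=
          mul_le_mul hfac1 hfac2 (Real.rpow_nonneg (integral_nonneg fun z =>
            Real.rpow_nonneg (hV_nonneg z) _) _)
            (Real.rpow_nonneg (Lnorm_nonneg _ _) _)
      _ = (∫ z : H d, v z ^ q') ^ ((1:ℝ)/q') * Lnorm (p j) f ^ ((3:ℝ)/4) := mul_comm _ _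


set_option maxHeartbeats 1000000 in
/-- `T'` with two sharp perturbations. -/
theorem statement10 (d : ℕ) (hd : 1 ≤ d) (p : Fin 3 → ℝ) (hp : IsAdmissible p)
    (η : ℝ) (hη : η ∈ Set.Ioo (0 : ℝ) 1) :
    ∀ ε : ℝ, 0 < ε → ∃ δ : ℝ, 0 < δ ∧
      ∀ f1 f2 : H d → ℂ, MemLp f1 (ENNReal.ofReal (p 0)) volume →
        MemLp f2 (ENNReal.ofReal (p 1)) volume →
        Lnorm (p 0) f1 ≤ δ → Lnorm (p 1) f2 ≤ δ →
      ∀ A : Matrix (Fin (2 * d)) (Fin (2 * d)) ℝ, opNorm (Aᵀ * Jmat d * A) ≤ δ →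
        ‖T'op d A
            ![fSharp η (gaussHR d p 0) f1, fSharp η (gaussHR d p 1) f2, gaussH d p 2]‖ ≤
          ε * (Lnorm (p 0) f1 ^ 2 + Lnorm (p 1) f2 ^ 2 + opNorm (Aᵀ * Jmat d * A) ^ 2) := by
  obtain ⟨C1, hC1, hH1⟩ := holder_piece d p hp η hη 0
  obtain ⟨C2, hC2, hH2⟩ := holder_piece d p hp η hη 1
  have hγ : 0 < γexp p 2 := γexp_pos hp 2
  set γ := γexp p 2 with hγdef
  intro ε hε
  set C0 : ℝ := 1 + γ * C1 * C2 with hC0def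
  have hγCC : 0 ≤ γ * C1 * C2 := mul_nonneg (mul_nonneg hγ.le hC1) hC2
  have hC0 : 0 < C0 := by rw [hC0def]; linarith
  refine ⟨min 1 ((ε / C0)^2), lt_min one_pos (by positivity), ?_⟩
  intro f1 f2 hf1 hf2 ha hb A hA
  obtain ⟨hD1int, hK1⟩ := hH1 f1 hf1
  obtain ⟨hD2int, hK2⟩ := hH2 f2 hf2
  set δ : ℝ := min 1 ((ε / C0)^2) with hδdef
  have hδ0 : 0 ≤ δ := le_min zero_le_one (sq_nonneg _)
  set F1 := fSharp η (gaussHR d p 0) f1 with hF1def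
  set F2 := fSharp η (gaussHR d p 1) f2 with hF2def
  set a := Lnorm (p 0) f1 with hadef
  set b := Lnorm (p 1) f2 with hbdef
  set M := opNorm (Aᵀ * Jmat d * A) with hMdef
  have ha0 : 0 ≤ a := Lnorm_nonneg _ _
  have hb0 : 0 ≤ b := Lnorm_nonneg _ _
  have hM0 : 0 ≤ M := opNorm_nonneg' _
  have hM1 : M ≤ 1 := le_trans hA (min_le_left _ _)
  set K1 := ∫ z : H d, ‖F1 z‖ * wt d z with hK1def
  set K2 := ∫ z : H d, ‖F2 z‖ * wt d z with hK2def
  have hK1n : 0 ≤ K1 :=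
    integral_nonneg fun z => mul_nonneg (norm_nonneg _) (wt_nonneg _ _)
  have hK2n : 0 ≤ K2 :=
    integral_nonneg fun z => mul_nonneg (norm_nonneg _) (wt_nonneg _ _)
  -- pointwise kernel bound
  have hker : ∀ z1 z2 : H d,
      ‖F1 z1 * F2 z2 *
        (gaussH d p 2 (-(z1.1 + z2.1),
            -(z1.2 + z2.2 + symp d (mapp A z1.1) (mapp A z2.1)))
          - gaussH d p 2 (-(z1.1 + z2.1), -(z1.2 + z2.2)))‖
      ≤ (γ * M) * ((‖F1 z1‖ * wt d z1) * (‖F2 z2‖ * wt d z2)) := by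
    intro z1 z2
    set s := symp d (mapp A z1.1) (mapp A z2.1) with hsdef
    have hs1 : |s| ≤ M * (‖z1.1‖ * ‖z2.1‖) := abs_symp_mapp_le d A z1.1 z2.1
    have hs2 : |s| ≤ ‖z1.1‖ * ‖z2.1‖ :=
      le_trans hs1 (mul_le_of_le_one_left (mul_nonneg (norm_nonneg _) (norm_nonneg _)) hM1)
    have hdiff : ‖gaussH d p 2 (-(z1.1 + z2.1), -(z1.2 + z2.2 + s))
        - gaussH d p 2 (-(z1.1 + z2.1), -(z1.2 + z2.2))‖
        ≤ γ * (M * (wt d z1 * wt d z2)) := by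
      rw [show gaussH d p 2 (-(z1.1 + z2.1), -(z1.2 + z2.2 + s))
          - gaussH d p 2 (-(z1.1 + z2.1), -(z1.2 + z2.2))
          = Complex.ofReal (gaussHR d p 2 (-(z1.1 + z2.1), -(z1.2 + z2.2 + s))
            - gaussHR d p 2 (-(z1.1 + z2.1), -(z1.2 + z2.2))) from by
          rw [Complex.ofReal_sub]; rfl]
      rw [Complex.norm_real, Real.norm_eq_abs]
      show |Real.exp (-(γ * (‖(-(z1.1 + z2.1) : E (2*d))‖ ^ 2 + (-(z1.2 + z2.2 + s)) ^ 2)))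
          - Real.exp (-(γ * (‖(-(z1.1 + z2.1) : E (2*d))‖ ^ 2 + (-(z1.2 + z2.2)) ^ 2)))| ≤ _
      refine le_trans (abs_exp_neg_sub_exp_neg_le (by positivity) (by positivity)) ?_
      rw [show γ * (‖(-(z1.1 + z2.1) : E (2*d))‖ ^ 2 + (-(z1.2 + z2.2 + s)) ^ 2)
          - γ * (‖(-(z1.1 + z2.1) : E (2*d))‖ ^ 2 + (-(z1.2 + z2.2)) ^ 2)
          = γ * (s * (2 * (z1.2 + z2.2) + s)) from by ring]
      rw [abs_mul, abs_of_pos hγ, abs_mul]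
      refine mul_le_mul_of_nonneg_left ?_ hγ.le
      have hB : |2 * (z1.2 + z2.2) + s| ≤ 2 * |z1.2| + 2 * |z2.2| + |s| := by
        have h1 := abs_add_le (2 * (z1.2 + z2.2)) s
        have h2 := abs_add_le z1.2 z2.2
        have h3 : |2 * (z1.2 + z2.2)| = 2 * |z1.2 + z2.2| := by
          rw [abs_mul, abs_two]
        linarith
      exact arith_key hM0 (norm_nonneg z1.1) (norm_nonneg z2.1) (abs_nonneg z1.2)
        (abs_nonneg z2.2) (abs_nonneg s) hs1 hs2 (abs_nonneg _) hB
    calc ‖F1 z1 * F2 z2 * (gaussH d p 2 (-(z1.1 + z2.1), -(z1.2 + z2.2 + s))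
          - gaussH d p 2 (-(z1.1 + z2.1), -(z1.2 + z2.2)))‖
        = ‖F1 z1‖ * ‖F2 z2‖ * ‖gaussH d p 2 (-(z1.1 + z2.1), -(z1.2 + z2.2 + s))
          - gaussH d p 2 (-(z1.1 + z2.1), -(z1.2 + z2.2))‖ := by
          rw [norm_mul, norm_mul]
      _ ≤ ‖F1 z1‖ * ‖F2 z2‖ * (γ * (M * (wt d z1 * wt d z2))) :=
          mul_le_mul_of_nonneg_left hdiff (mul_nonneg (norm_nonneg _) (norm_nonneg _))
      _ = (γ * M) * ((‖F1 z1‖ * wt d z1) * (‖F2 z2‖ * wt d z2)) := by ring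
  have h0eq : (![F1, F2, gaussH d p 2]) 0 = F1 := rfl
  have h1eq : (![F1, F2, gaussH d p 2]) 1 = F2 := rfl
  have h2eq : (![F1, F2, gaussH d p 2]) 2 = gaussH d p 2 := rfl
  have hT'eq : T'op d A ![F1, F2, gaussH d p 2]
      = ∫ z1 : H d, ∫ z2 : H d, F1 z1 * F2 z2 *
        (gaussH d p 2 (-(z1.1 + z2.1),
            -(z1.2 + z2.2 + symp d (mapp A z1.1) (mapp A z2.1)))
          - gaussH d p 2 (-(z1.1 + z2.1), -(z1.2 + z2.2))) := by
    unfold T'op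
    simp only [h0eq, h1eq, h2eq]
  have hT : ‖T'op d A ![F1, F2, gaussH d p 2]‖ ≤ (γ * M) * (K1 * K2) := by
    rw [hT'eq]
    calc ‖∫ z1 : H d, ∫ z2 : H d, F1 z1 * F2 z2 *
          (gaussH d p 2 (-(z1.1 + z2.1),
              -(z1.2 + z2.2 + symp d (mapp A z1.1) (mapp A z2.1)))
            - gaussH d p 2 (-(z1.1 + z2.1), -(z1.2 + z2.2)))‖
        ≤ ∫ z1 : H d, ‖∫ z2 : H d, F1 z1 * F2 z2 *
          (gaussH d p 2 (-(z1.1 + z2.1),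
              -(z1.2 + z2.2 + symp d (mapp A z1.1) (mapp A z2.1)))
            - gaussH d p 2 (-(z1.1 + z2.1), -(z1.2 + z2.2)))‖ :=
          norm_integral_le_integral_norm _
      _ ≤ ∫ z1 : H d, ((γ * M) * K2) * (‖F1 z1‖ * wt d z1) := by
          refine integral_mono_of_nonneg
            (Filter.Eventually.of_forall fun z1 => norm_nonneg _)
            (hD1int.const_mul _) (Filter.Eventually.of_forall fun z1 => ?_)
          calc ‖∫ z2 : H d, F1 z1 * F2 z2 *
              (gaussH d p 2 (-(z1.1 + z2.1),
                  -(z1.2 + z2.2 + symp d (mapp A z1.1) (mapp A z2.1)))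
                - gaussH d p 2 (-(z1.1 + z2.1), -(z1.2 + z2.2)))‖
              ≤ ∫ z2 : H d, ‖F1 z1 * F2 z2 *
              (gaussH d p 2 (-(z1.1 + z2.1),
                  -(z1.2 + z2.2 + symp d (mapp A z1.1) (mapp A z2.1)))
                - gaussH d p 2 (-(z1.1 + z2.1), -(z1.2 + z2.2)))‖ :=
              norm_integral_le_integral_norm _
            _ ≤ ∫ z2 : H d, ((γ * M) * (‖F1 z1‖ * wt d z1)) * (‖F2 z2‖ * wt d z2) := by
                refine integral_mono_of_nonneg
                  (Filter.Eventually.of_forall fun z2 => norm_nonneg _)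
                  (hD2int.const_mul _)
                  (Filter.Eventually.of_forall fun z2 => ?_)
                simpa only [mul_assoc] using hker z1 z2
            _ = ((γ * M) * (‖F1 z1‖ * wt d z1)) * K2 := integral_const_mul _ _
            _ = ((γ * M) * K2) * (‖F1 z1‖ * wt d z1) := by ring
      _ = ((γ * M) * K2) * K1 := integral_const_mul _ _
      _ = (γ * M) * (K1 * K2) := by ring
  refine le_trans hT ?_
  have step1 : (γ * M) * (K1 * K2)
      ≤ (γ * C1 * C2) * (M * (a ^ ((3:ℝ)/4) * b ^ ((3:ℝ)/4))) := by
    have h12 : K1 * K2 ≤ (C1 * a ^ ((3:ℝ)/4)) * (C2 * b ^ ((3:ℝ)/4)) :=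
      mul_le_mul hK1 hK2 hK2n
        (mul_nonneg hC1 (Real.rpow_nonneg ha0 _))
    calc (γ * M) * (K1 * K2)
        ≤ (γ * M) * ((C1 * a ^ ((3:ℝ)/4)) * (C2 * b ^ ((3:ℝ)/4))) :=
          mul_le_mul_of_nonneg_left h12 (mul_nonneg hγ.le hM0)
      _ = (γ * C1 * C2) * (M * (a ^ ((3:ℝ)/4) * b ^ ((3:ℝ)/4))) := by ring
  refine le_trans step1 ?_
  have key2 : M * (a ^ ((3:ℝ)/4) * b ^ ((3:ℝ)/4))
      ≤ δ ^ ((1:ℝ)/2) * (a ^ 2 + b ^ 2 + M ^ 2) := by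
    have ha34 : a ^ ((3:ℝ)/4) ≤ δ ^ ((1:ℝ)/4) * a ^ ((1:ℝ)/2) := by
      have hsplit : a ^ ((3:ℝ)/4) = a ^ ((1:ℝ)/4) * a ^ ((1:ℝ)/2) := by
        rw [← Real.rpow_add' ha0 (by norm_num : (1:ℝ)/4 + 1/2 ≠ 0)]
        norm_num
      rw [hsplit]
      exact mul_le_mul_of_nonneg_right
        (Real.rpow_le_rpow ha0 ha (by norm_num)) (Real.rpow_nonneg ha0 _)
    have hb34 : b ^ ((3:ℝ)/4) ≤ δ ^ ((1:ℝ)/4) * b ^ ((1:ℝ)/2) := by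
      have hsplit : b ^ ((3:ℝ)/4) = b ^ ((1:ℝ)/4) * b ^ ((1:ℝ)/2) := by
        rw [← Real.rpow_add' hb0 (by norm_num : (1:ℝ)/4 + 1/2 ≠ 0)]
        norm_num
      rw [hsplit]
      exact mul_le_mul_of_nonneg_right
        (Real.rpow_le_rpow hb0 hb (by norm_num)) (Real.rpow_nonneg hb0 _)
    have hδhalf : δ ^ ((1:ℝ)/4) * δ ^ ((1:ℝ)/4) = δ ^ ((1:ℝ)/2) := by
      rw [← Real.rpow_add' hδ0 (by norm_num : (1:ℝ)/4 + 1/4 ≠ 0)]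
      norm_num
    have hprod : a ^ ((3:ℝ)/4) * b ^ ((3:ℝ)/4)
        ≤ δ ^ ((1:ℝ)/2) * (a ^ ((1:ℝ)/2) * b ^ ((1:ℝ)/2)) := by
      calc a ^ ((3:ℝ)/4) * b ^ ((3:ℝ)/4)
          ≤ (δ ^ ((1:ℝ)/4) * a ^ ((1:ℝ)/2)) * (δ ^ ((1:ℝ)/4) * b ^ ((1:ℝ)/2)) :=
            mul_le_mul ha34 hb34 (Real.rpow_nonneg hb0 _)
              (mul_nonneg (Real.rpow_nonneg hδ0 _) (Real.rpow_nonneg ha0 _))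
        _ = (δ ^ ((1:ℝ)/4) * δ ^ ((1:ℝ)/4)) * (a ^ ((1:ℝ)/2) * b ^ ((1:ℝ)/2)) := by ring
        _ = δ ^ ((1:ℝ)/2) * (a ^ ((1:ℝ)/2) * b ^ ((1:ℝ)/2)) := by rw [hδhalf]
    have hinner : M * (a ^ ((1:ℝ)/2) * b ^ ((1:ℝ)/2)) ≤ a ^ 2 + b ^ 2 + M ^ 2 := by
      set sa := a ^ ((1:ℝ)/2) with hsadef
      set sb := b ^ ((1:ℝ)/2) with hsbdef
      have hsa0 : 0 ≤ sa := Real.rpow_nonneg ha0 _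
      have hsb0 : 0 ≤ sb := Real.rpow_nonneg hb0 _
      have hsa2 : sa * sa = a := by
        rw [hsadef, ← Real.rpow_add' ha0 (by norm_num : (1:ℝ)/2 + 1/2 ≠ 0)]
        norm_num
      have hsb2 : sb * sb = b := by
        rw [hsbdef, ← Real.rpow_add' hb0 (by norm_num : (1:ℝ)/2 + 1/2 ≠ 0)]
        norm_num
      have hab : (sa * sb) ^ 2 = a * b := by
        calc (sa * sb) ^ 2 = (sa * sa) * (sb * sb) := by ring
          _ = a * b := by rw [hsa2, hsb2]
      have h1 := two_mul_le_add_sq M (sa * sb)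
      have h3 := two_mul_le_add_sq a b
      linarith [sq_nonneg a, sq_nonneg b, sq_nonneg M, h1, h3, hab]
    calc M * (a ^ ((3:ℝ)/4) * b ^ ((3:ℝ)/4))
        ≤ M * (δ ^ ((1:ℝ)/2) * (a ^ ((1:ℝ)/2) * b ^ ((1:ℝ)/2))) :=
          mul_le_mul_of_nonneg_left hprod hM0
      _ = δ ^ ((1:ℝ)/2) * (M * (a ^ ((1:ℝ)/2) * b ^ ((1:ℝ)/2))) := by ring
      _ ≤ δ ^ ((1:ℝ)/2) * (a ^ 2 + b ^ 2 + M ^ 2) :=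
          mul_le_mul_of_nonneg_left hinner (Real.rpow_nonneg hδ0 _)
  have key3 : (γ * C1 * C2) * δ ^ ((1:ℝ)/2) ≤ ε := by
    have h1 : γ * C1 * C2 ≤ C0 := by rw [hC0def]; linarith
    have h2 : δ ^ ((1:ℝ)/2) ≤ ε / C0 := by
      have hδle : δ ≤ (ε / C0) ^ 2 := min_le_right _ _
      have hh := Real.rpow_le_rpow hδ0 hδle (by norm_num : (0:ℝ) ≤ 1/2)
      rwa [show ((ε / C0) ^ 2 : ℝ) ^ ((1:ℝ)/2) = ε / C0 from by
        rw [← Real.rpow_natCast (ε / C0) 2, ← Real.rpow_mul (by positivity)]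
        norm_num] at hh
    calc (γ * C1 * C2) * δ ^ ((1:ℝ)/2) ≤ C0 * (ε / C0) :=
        mul_le_mul h1 h2 (Real.rpow_nonneg hδ0 _) hC0.le
      _ = ε := by field_simp
  calc (γ * C1 * C2) * (M * (a ^ ((3:ℝ)/4) * b ^ ((3:ℝ)/4)))
      ≤ (γ * C1 * C2) * (δ ^ ((1:ℝ)/2) * (a ^ 2 + b ^ 2 + M ^ 2)) :=
        mul_le_mul_of_nonneg_left key2 hγCC
    _ = ((γ * C1 * C2) * δ ^ ((1:ℝ)/2)) * (a ^ 2 + b ^ 2 + M ^ 2) := by ring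
    _ ≤ ε * (a ^ 2 + b ^ 2 + M ^ 2) := by
        refine mul_le_mul_of_nonneg_right key3 ?_
        positivity


end Stability
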